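/- In Ind(C) for C a category with finite limits, an ind-object Y is semi-strict if and only if for any two ind-objects X and Z equipped with maps to Y, the canonical map X ×_Y Z → X × Z is proper. -/

import Mathlib

open CategoryTheory CategoryTheory.Limits

universe v u

variable {C : Type u} [Category.{v} C]

/-- An object of `Ind C` is compact if it lies in the essential image of `C`. -/
noncomputable def IndCompact (X : Ind C) : Prop :=
  ∃ c : C, Nonempty (X ≅ Ind.yoneda.obj c)

/-- A morphism `f : X ⟶ Y` in `Ind C` is proper if for any `g : Z ⟶ Y` with `Z` compact,
the pullback `X ×_Y Z` is compact. -/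
noncomputable def IsProper [HasPullbacks (Ind C)] {X Y : Ind C} (f : X ⟶ Y) : Prop :=
  ∀ (Z : Ind C) (g : Z ⟶ Y), IndCompact Z → IndCompact (pullback f g)

/-- An ind-object `Y` is semi-strict if any map from a compact object to `Y` is proper. -/
noncomputable def IsSemiStrict [HasPullbacks (Ind C)] (Y : Ind C) : Prop :=
  ∀ (X : Ind C) (f : X ⟶ Y), IndCompact X → IsProper f

lemma indCompact_of_iso {X X' : Ind C} (e : X ≅ X') (h : IndCompact X) : IndCompact X' := by
  obtain ⟨c, ⟨i⟩⟩ := h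
  exact ⟨c, ⟨e.symm ≪≫ i⟩⟩

/-- `Ind.yoneda` preserves all limits that exist in `C`, since its composition with the
fully faithful inclusion into presheaves is the Yoneda embedding, which preserves limits. -/
noncomputable instance indYoneda_preservesLimits :
    PreservesLimitsOfSize.{0, 0} (Ind.yoneda (C := C)) :=
  have : PreservesLimitsOfSize.{0, 0} (Ind.yoneda ⋙ Ind.inclusion C) :=
    preservesLimits_of_natIso Ind.yonedaCompInclusion.symm
  preservesLimits_of_reflects_of_preserves Ind.yoneda (Ind.inclusion C)

/-- Compact ind-objects are closed under pullbacks (when `C` has finite limits). -/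
lemma indCompact_pullback [HasFiniteLimits C] [HasPullbacks (Ind C)]
    {X Z W : Ind C} (f : X ⟶ W) (g : Z ⟶ W)
    (hX : IndCompact X) (hZ : IndCompact Z) (hW : IndCompact W) :
    IndCompact (pullback f g) := by
  obtain ⟨a, ⟨ea⟩⟩ := hX
  obtain ⟨b, ⟨eb⟩⟩ := hZ
  obtain ⟨w, ⟨ew⟩⟩ := hW
  let f' : a ⟶ w := Ind.yoneda.preimage (ea.inv ≫ f ≫ ew.hom)
  let g' : b ⟶ w := Ind.yoneda.preimage (eb.inv ≫ g ≫ ew.hom)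
  have e1 : pullback f g ≅ pullback (Ind.yoneda.map f') (Ind.yoneda.map g') :=
    asIso (pullback.map f g _ _ ea.hom eb.hom ew.hom
      (by simp [f', Functor.map_preimage]) (by simp [g', Functor.map_preimage]))
  exact ⟨pullback f' g', ⟨e1 ≪≫ (PreservesPullback.iso Ind.yoneda f' g').symm⟩⟩

/-- Compact ind-objects are closed under binary products (when `C` has finite limits). -/
lemma indCompact_prod [HasFiniteLimits C] [HasBinaryProducts (Ind C)]
    {X Z : Ind C} (hX : IndCompact X) (hZ : IndCompact Z) : IndCompact (X ⨯ Z) := by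
  obtain ⟨a, ⟨ea⟩⟩ := hX
  obtain ⟨b, ⟨eb⟩⟩ := hZ
  exact ⟨a ⨯ b, ⟨prod.mapIso ea eb ≪≫ (PreservesLimitPair.iso Ind.yoneda a b).symm⟩⟩

/-- An ind-object `Y` is semi-strict if and only if for any two ind-objects `X`
and `Z` equipped with maps to `Y`, the canonical map `X ×_Y Z ⟶ X × Z` is proper. -/
theorem stmt_8 [HasFiniteLimits C] [HasPullbacks (Ind C)] [HasBinaryProducts (Ind C)]
    (Y : Ind C) :
    IsSemiStrict Y ↔
      ∀ (X Z : Ind C) (f : X ⟶ Y) (g : Z ⟶ Y),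
        IsProper (prod.lift (pullback.fst f g) (pullback.snd f g)) := by
  constructor
  · intro hY X Z f g W h hW
    set c : pullback f g ⟶ X ⨯ Z := prod.lift (pullback.fst f g) (pullback.snd f g) with hc
    set a : W ⟶ Y := h ≫ prod.fst ≫ f with ha
    set b : W ⟶ Y := h ≫ prod.snd ≫ g with hb
    -- `K := W ×_Y W` is compact by semi-strictness.
    have hK : IndCompact (pullback a b) := hY W a hW W b hW
    -- The pullback of `c` along `h` is isomorphic to the equalizer of `a` and `b`,
    -- realized as a pullback of compact objects.
    set m : pullback a b ⟶ W ⨯ W := prod.lift (pullback.fst a b) (pullback.snd a b) with hm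
    set d : W ⟶ W ⨯ W := prod.lift (𝟙 W) (𝟙 W) with hd
    have hQ : IndCompact (pullback m d) :=
      indCompact_pullback m d hK hW (indCompact_prod hW hW)
    -- equations for the pullback of `c` along `h`
    have eq1 : pullback.fst c h ≫ pullback.fst f g = pullback.snd c h ≫ h ≫ prod.fst := by
      have := pullback.condition (f := c) (g := h)
      calc pullback.fst c h ≫ pullback.fst f g
          = pullback.fst c h ≫ c ≫ prod.fst := by simp [hc, prod.lift_fst]
        _ = pullback.snd c h ≫ h ≫ prod.fst := by
            rw [← Category.assoc, this, Category.assoc]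
    have eq2 : pullback.fst c h ≫ pullback.snd f g = pullback.snd c h ≫ h ≫ prod.snd := by
      have := pullback.condition (f := c) (g := h)
      calc pullback.fst c h ≫ pullback.snd f g
          = pullback.fst c h ≫ c ≫ prod.snd := by simp [hc, prod.lift_snd]
        _ = pullback.snd c h ≫ h ≫ prod.snd := by
            rw [← Category.assoc, this, Category.assoc]
    have keyP : pullback.snd c h ≫ a = pullback.snd c h ≫ b := by
      rw [ha, hb]
      calc pullback.snd c h ≫ h ≫ prod.fst ≫ f
          = (pullback.snd c h ≫ h ≫ prod.fst) ≫ f := by simp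
        _ = (pullback.fst c h ≫ pullback.fst f g) ≫ f := by rw [eq1]
        _ = pullback.fst c h ≫ pullback.fst f g ≫ f := by simp
        _ = pullback.fst c h ≫ pullback.snd f g ≫ g := by rw [pullback.condition]
        _ = (pullback.fst c h ≫ pullback.snd f g) ≫ g := by simp
        _ = (pullback.snd c h ≫ h ≫ prod.snd) ≫ g := by rw [eq2]
        _ = pullback.snd c h ≫ h ≫ prod.snd ≫ g := by simp
    -- equations for the pullback of `m` along `d`
    have qe1 : pullback.fst m d ≫ pullback.fst a b = pullback.snd m d := by
      have := pullback.condition (f := m) (g := d)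
      calc pullback.fst m d ≫ pullback.fst a b
          = pullback.fst m d ≫ m ≫ prod.fst := by simp [hm, prod.lift_fst]
        _ = pullback.snd m d ≫ d ≫ prod.fst := by
            rw [← Category.assoc, this, Category.assoc]
        _ = pullback.snd m d := by simp [hd, prod.lift_fst]
    have qe2 : pullback.fst m d ≫ pullback.snd a b = pullback.snd m d := by
      have := pullback.condition (f := m) (g := d)
      calc pullback.fst m d ≫ pullback.snd a b
          = pullback.fst m d ≫ m ≫ prod.snd := by simp [hm, prod.lift_snd]
        _ = pullback.snd m d ≫ d ≫ prod.snd := by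
            rw [← Category.assoc, this, Category.assoc]
        _ = pullback.snd m d := by simp [hd, prod.lift_snd]
    have keyQ : (pullback.snd m d ≫ h ≫ prod.fst) ≫ f = (pullback.snd m d ≫ h ≫ prod.snd) ≫ g := by
      have : pullback.snd m d ≫ a = pullback.snd m d ≫ b := by
        calc pullback.snd m d ≫ a
            = (pullback.fst m d ≫ pullback.fst a b) ≫ a := by rw [qe1]
          _ = pullback.fst m d ≫ pullback.fst a b ≫ a := by simp
          _ = pullback.fst m d ≫ pullback.snd a b ≫ b := by rw [pullback.condition]
          _ = (pullback.fst m d ≫ pullback.snd a b) ≫ b := by simp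
          _ = pullback.snd m d ≫ b := by rw [qe2]
      simpa [ha, hb] using this
    -- the two maps
    let φ : pullback c h ⟶ pullback m d :=
      pullback.lift (pullback.lift (pullback.snd c h) (pullback.snd c h) keyP)
        (pullback.snd c h)
        (by apply Limits.prod.hom_ext <;> simp [hm, hd, prod.lift_fst, prod.lift_snd, prod.lift_fst_assoc, prod.lift_snd_assoc, pullback.lift_fst, pullback.lift_snd, pullback.lift_fst_assoc, pullback.lift_snd_assoc])
    let ψ : pullback m d ⟶ pullback c h :=
      pullback.lift
        (pullback.lift (pullback.snd m d ≫ h ≫ prod.fst) (pullback.snd m d ≫ h ≫ prod.snd) keyQ)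
        (pullback.snd m d)
        (by apply Limits.prod.hom_ext <;> simp [hc, prod.lift_fst, prod.lift_snd, prod.lift_fst_assoc, prod.lift_snd_assoc, pullback.lift_fst, pullback.lift_snd, pullback.lift_fst_assoc, pullback.lift_snd_assoc])
    have hom_inv : φ ≫ ψ = 𝟙 _ := by
      apply pullback.hom_ext
      · apply pullback.hom_ext
        · simp [prod.lift_fst, prod.lift_snd, prod.lift_fst_assoc, prod.lift_snd_assoc, pullback.lift_fst, pullback.lift_snd, pullback.lift_fst_assoc, pullback.lift_snd_assoc, φ, ψ, eq1]
        · simp [prod.lift_fst, prod.lift_snd, prod.lift_fst_assoc, prod.lift_snd_assoc, pullback.lift_fst, pullback.lift_snd, pullback.lift_fst_assoc, pullback.lift_snd_assoc, φ, ψ, eq2]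
      · simp [prod.lift_fst, prod.lift_snd, prod.lift_fst_assoc, prod.lift_snd_assoc, pullback.lift_fst, pullback.lift_snd, pullback.lift_fst_assoc, pullback.lift_snd_assoc, φ, ψ]
    have inv_hom : ψ ≫ φ = 𝟙 _ := by
      apply pullback.hom_ext
      · apply pullback.hom_ext
        · simp [prod.lift_fst, prod.lift_snd, prod.lift_fst_assoc, prod.lift_snd_assoc, pullback.lift_fst, pullback.lift_snd, pullback.lift_fst_assoc, pullback.lift_snd_assoc, φ, ψ, qe1]
        · simp [prod.lift_fst, prod.lift_snd, prod.lift_fst_assoc, prod.lift_snd_assoc, pullback.lift_fst, pullback.lift_snd, pullback.lift_fst_assoc, pullback.lift_snd_assoc, φ, ψ, qe2]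
      · simp [prod.lift_fst, prod.lift_snd, prod.lift_fst_assoc, prod.lift_snd_assoc, pullback.lift_fst, pullback.lift_snd, pullback.lift_fst_assoc, pullback.lift_snd_assoc, φ, ψ]
    exact indCompact_of_iso (Iso.symm ⟨φ, ψ, hom_inv, inv_hom⟩) hQ
  · intro H X f hX Z g hZ
    have h1 := H X Z f g (X ⨯ Z) (𝟙 _) (indCompact_prod hX hZ)
    exact indCompact_of_iso
      (asIso (pullback.fst (prod.lift (pullback.fst f g) (pullback.snd f g)) (𝟙 (X ⨯ Z)))) h1
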